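/- With the notation of the previous statement (D a non-simple perfect matching, S the support of a simple submodule, α and β the exiting and entering arrow sets, and D' = (D \ α) ∪ β), the perfect matchings D and D' are equivalent: for every cycle p in Q, n_D(p) = n_{D'}(p). The key combinatorial fact is that any cycle enters the subquiver S the same number of times as it exits it. -/

import Mathlib

open Classical

/-- A quiver given by tail and head maps on an arrow type. -/
structure QuiverData (V E : Type*) where
  t : E → V
  h : E → V

variable {V E V' E' : Type*}

/-- `n_D(p)`: the number of steps of the path `p` (a list of arrows, in traversal
order) lying in the set of arrows `D`. -/
noncomputable def nD (D : Set E) (p : List E) : ℕ :=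
  p.countP (fun e => decide (e ∈ D))

/-- `p` is a composable path: the head of each step is the tail of the next. -/
def IsPath (Q : QuiverData V E) (p : List E) : Prop :=
  p.Chain' (fun a b => Q.h a = Q.t b)

/-- `p` is a nonempty oriented cycle. -/
def IsCycle (Q : QuiverData V E) (p : List E) : Prop :=
  IsPath Q p ∧ p ≠ [] ∧
    ∃ a b, p.head? = some a ∧ p.getLast? = some b ∧ Q.h b = Q.t a

/-- `D` is a perfect matching with respect to the set `U` of unit cycles:
each unit cycle contains precisely one arrow of `D`. -/
def IsPerfectMatching (U : Set (List E)) (D : Set E) : Prop :=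
  ∀ c ∈ U, nD D c = 1

/-- Abstract combinatorial model of a dimer quiver: the distinguished unit
cycles are oriented cycles, and each arrow lies in exactly two unit cycles. -/
def IsDimer (Q : QuiverData V E) (U : Set (List E)) : Prop :=
  (∀ c ∈ U, IsCycle Q c) ∧ (∀ e : E, {c ∈ U | e ∈ c}.ncard = 2)

/-- The defining relations of the dimer algebra: `p ∼ q` whenever `pa` and `qa`
are unit cycles for a common arrow `a` (here the path `pa`, "first `a`, then `p`",
is the list `a :: p`). -/
inductive DimerRel (U : Set (List E)) : List E → List E → Prop
  | base {p q : List E} {a : E} : (a :: p) ∈ U → (a :: q) ∈ U → DimerRel U p q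

/-- The congruence on paths generated by a relation `R`: the smallest equivalence
relation containing `R` and compatible with concatenation of paths.
`PathEquiv R p q` models `p = q` modulo the ideal generated by `R`. -/
inductive PathEquiv (R : List E → List E → Prop) : List E → List E → Prop
  | of {p q : List E} : R p q → PathEquiv R p q
  | refl (p : List E) : PathEquiv R p p
  | symm {p q : List E} : PathEquiv R p q → PathEquiv R q p
  | trans {p q r : List E} : PathEquiv R p q → PathEquiv R q r → PathEquiv R p r
  | mul {p q p' q' : List E} : PathEquiv R p q → PathEquiv R p' q' →
      PathEquiv R (p ++ p') (q ++ q')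

/-- Two sets of arrows are equivalent perfect matchings when they assign the same
count to every cycle. -/
def MatchingEquiv (Q : QuiverData V E) (D D' : Set E) : Prop :=
  ∀ p, IsCycle Q p → nD D p = nD D' p

/-- An arrow is nonrigid if every perfect matching containing it is equivalent to
a perfect matching not containing it. -/
def NonrigidArrow (Q : QuiverData V E) (U : Set (List E)) (e : E) : Prop :=
  ∀ D, IsPerfectMatching U D → e ∈ D →
    ∃ D', IsPerfectMatching U D' ∧ MatchingEquiv Q D D' ∧ e ∉ D'

/-- `p` is a path from `u` to `v`. -/
def PathFromTo (Q : QuiverData V E) (p : List E) (u v : V) : Prop :=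
  IsPath Q p ∧ ((p = [] ∧ u = v) ∨
    ∃ a b, p.head? = some a ∧ p.getLast? = some b ∧ Q.t a = u ∧ Q.h b = v)

/-- A perfect matching `D` is simple if `Q \ D` is strongly connected. -/
def IsSimpleMatching (Q : QuiverData V E) (U : Set (List E)) (D : Set E) : Prop :=
  IsPerfectMatching U D ∧
    ∀ u v : V, ∃ p, PathFromTo Q p u v ∧ ∀ e ∈ p, e ∉ D

/-- `ρ`, `φ` present `Q'` as obtained from `Q` by contracting the arrows `e`
with `φ e = none` to vertices. -/
def IsContractionMap (Q : QuiverData V E) (Q' : QuiverData V' E')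
    (ρ : V → V') (φ : E → Option E') : Prop :=
  (∀ e e', φ e = some e' → Q'.t e' = ρ (Q.t e) ∧ Q'.h e' = ρ (Q.h e)) ∧
  (∀ e, φ e = none → ρ (Q.t e) = ρ (Q.h e)) ∧
  Function.Surjective ρ ∧ (∀ e' : E', ∃ e, φ e = some e')

/-- Endpoints of an arrow traversed forwards (`true`) or backwards (`false`). -/
def dirEnds (Q : QuiverData V E) : E × Bool → V × V
  | (e, true) => (Q.t e, Q.h e)
  | (e, false) => (Q.h e, Q.t e)

/-- A nonempty unoriented cycle in the underlying graph of `Q`. -/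
def IsUnorientedCycle (Q : QuiverData V E) (w : List (E × Bool)) : Prop :=
  w ≠ [] ∧ w.Chain' (fun x y => (dirEnds Q x).2 = (dirEnds Q y).1) ∧
    ∃ x y, w.head? = some x ∧ w.getLast? = some y ∧
      (dirEnds Q y).2 = (dirEnds Q x).1

/-- `c'` is a cyclic rotation of `c`. -/
def IsRotation (c c' : List E) : Prop := ∃ x y, c = x ++ y ∧ c' = y ++ x

/-- A unit cycle based at the vertex `i`: a cyclic rotation of a unit cycle whose
first arrow has tail `i`. -/
def BasedUnitCycle (Q : QuiverData V E) (U : Set (List E)) (i : V)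
    (c : List E) : Prop :=
  (∃ c₀ ∈ U, IsRotation c₀ c) ∧ ∃ a, c.head? = some a ∧ Q.t a = i

/-- Walk lemma: a composable path avoiding `D` that starts in `SV` ends in `SV`. -/
lemma walk_lemma (Q : QuiverData V E) (D : Set E) (SV : Set V)
    (hclosed : ∀ a : E, a ∉ D → Q.t a ∈ SV → Q.h a ∈ SV) :
    ∀ p : List E, p.Chain' (fun a b => Q.h a = Q.t b) → (∀ e ∈ p, e ∉ D) →
      ∀ a b, p.head? = some a → p.getLast? = some b → Q.t a ∈ SV → Q.h b ∈ SV := by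
  intro p
  induction p with
  | nil => intro _ _ a b ha; simp at ha
  | cons x rest ih =>
    intro hchain hD a b ha hb hta
    cases rest with
    | nil =>
      simp at ha hb; subst ha; subst hb
      exact hclosed x (hD x (by simp)) hta
    | cons y rest' =>
      simp at ha; subst ha
      have hxy : Q.h x = Q.t y := (List.isChain_cons_cons.mp hchain).1
      have hhy : Q.t y ∈ SV := hxy ▸ hclosed x (hD x (by simp)) hta
      have hb' : (y :: rest').getLast? = some b := by
        rw [List.getLast?_cons_cons] at hb; exact hb
      exact ih (List.isChain_cons_cons.mp hchain).2 (fun e he => hD e (by simp [he]))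
        y b rfl hb' hhy

/-- No arrow of `D` enters `SV`. -/
lemma no_entering (Q : QuiverData V E) (U : Set (List E))
    (hdimer : IsDimer Q U) (D : Set E) (hD : IsPerfectMatching U D)
    (SV : Set V)
    (hclosed : ∀ a : E, a ∉ D → Q.t a ∈ SV → Q.h a ∈ SV) :
    ∀ a : E, a ∈ D → Q.h a ∈ SV → Q.t a ∈ SV := by
  intro a haD hha
  -- get a unit cycle through a
  have hcard := hdimer.2 a
  have hne : {c ∈ U | a ∈ c}.Nonempty := by
    apply Set.nonempty_of_ncard_ne_zero; rw [hcard]; norm_num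
  obtain ⟨c, hcU, hac⟩ := hne
  have hcyc : IsCycle Q c := hdimer.1 c hcU
  have hcount : nD D c = 1 := hD c hcU
  obtain ⟨x, y, hc⟩ := List.append_of_mem hac
  -- all arrows of x and y are outside D
  rw [hc] at hcount
  unfold nD at hcount
  rw [List.countP_append, List.countP_cons] at hcount
  simp [haD] at hcount
  have hx0 : ∀ e ∈ x, e ∉ D := by
    intro e he
    have h0 : List.countP (fun e => decide (e ∈ D)) x = 0 := by omega
    have := List.countP_eq_zero.mp h0 e he
    simpa using this
  have hy0 : ∀ e ∈ y, e ∉ D := by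
    intro e he
    have h0 : List.countP (fun e => decide (e ∈ D)) y = 0 := by omega
    have := List.countP_eq_zero.mp h0 e he
    simpa using this
  obtain ⟨hpath, hcne, f, g, hf, hg, hfg⟩ := hcyc
  rw [hc] at hpath hf hg
  unfold IsPath at hpath
  replace hpath := List.isChain_append.mp hpath
  obtain ⟨hchx, hchay, hjoin⟩ := hpath
  have hchy : y.Chain' (fun a b => Q.h a = Q.t b) := hchay.tail
  -- head of c
  -- step 1: from h a ∈ SV, walk along y get h (last y) ∈ SV (if y ≠ []),
  -- which equals h (last c)
  have hlastSV : Q.h g ∈ SV ∧ g = ((x ++ a :: y).getLast (by simp)) := by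
    constructor
    · cases y with
      | nil =>
        have : (x ++ [a]).getLast? = some a := by
          rw [List.getLast?_append_cons]; simp
        rw [this] at hg
        cases hg; exact hha
      | cons y0 ys =>
        have hty0 : Q.t y0 = Q.h a := ((List.isChain_cons_cons.mp hchay).1).symm
        have hg' : (y0 :: ys).getLast? = some g := by
          rw [List.getLast?_append_cons, List.getLast?_cons_cons] at hg
          exact hg
        exact walk_lemma Q D SV hclosed (y0 :: ys) hchy hy0 y0 g rfl hg'
          (hty0 ▸ hha)
    · have := List.getLast?_eq_getLast (l := x ++ a :: y) (by simp)
      rw [hg] at this; exact Option.some_injective _ this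
  -- step 2: h g = t f; walk along x from t f if x ≠ []
  cases x with
  | nil =>
    simp at hf; subst hf
    rw [← hfg]; exact hlastSV.1
  | cons x0 xs =>
    have hf' : x0 = f := by simpa using hf
    subst hf'
    have htx0 : Q.t x0 ∈ SV := hfg ▸ hlastSV.1
    -- walk along x0 :: xs gives h (last x) ∈ SV, and h (last x) = t a
    have hxlast : ∃ bx, (x0 :: xs).getLast? = some bx ∧ Q.h bx = Q.t a := by
      refine ⟨(x0 :: xs).getLast (by simp), List.getLast?_eq_getLast _, ?_⟩
      have := hjoin ((x0 :: xs).getLast (by simp))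
        (by rw [List.getLast?_eq_getLast (l := x0 :: xs) (by simp)]; rfl) a rfl
      exact this
    obtain ⟨bx, hbx, hbxa⟩ := hxlast
    have := walk_lemma Q D SV hclosed (x0 :: xs) hchx hx0 x0 bx rfl hbx htx0
    rw [hbxa] at this; exact this

/-- Indicator function of a set, valued in ℕ. -/
noncomputable def ind {α : Type*} (X : Set α) (x : α) : ℕ :=
  if x ∈ X then 1 else 0

/-- Telescoping sums of head/tail indicators along a composable path. -/
lemma telescope (Q : QuiverData V E) (SV : Set V) :
    ∀ p : List E, p.Chain' (fun a b => Q.h a = Q.t b) → ∀ a b,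
      p.head? = some a → p.getLast? = some b →
      (p.map (fun e => ind SV (Q.t e))).sum + ind SV (Q.h b)
      = (p.map (fun e => ind SV (Q.h e))).sum + ind SV (Q.t a) := by
  intro p
  induction p with
  | nil => intro _ a b ha; simp at ha
  | cons x rest ih =>
    intro hchain a b ha hb
    cases rest with
    | nil =>
      simp at ha hb; subst ha; subst hb; simp [add_comm]
    | cons y rest' =>
      simp at ha; subst ha
      have hb' : (y :: rest').getLast? = some b := by
        rw [List.getLast?_cons_cons] at hb; exact hb
      have hih := ih (List.isChain_cons_cons.mp hchain).2 y b rfl hb'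
      have hxy : Q.h x = Q.t y := (List.isChain_cons_cons.mp hchain).1
      simp only [List.map_cons, List.sum_cons] at hih ⊢
      rw [hxy]
      omega

lemma sum_aux (f g ft fh : E → ℕ) (key : ∀ e, f e + ft e = g e + fh e) :
    ∀ q : List E,
      (q.map f).sum + (q.map ft).sum = (q.map g).sum + (q.map fh).sum := by
  intro q
  induction q with
  | nil => simp
  | cons x l ih =>
    simp only [List.map_cons, List.sum_cons]
    have := key x
    omega

lemma count_eq_sum (X : Set E) : ∀ q : List E,
    nD X q = (q.map (ind X)).sum := by
  intro q
  induction q with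
  | nil => simp [nD]
  | cons x l ih =>
    simp only [List.map_cons, List.sum_cons, ← ih, nD, List.countP_cons]
    by_cases hx : x ∈ X <;> simp [ind, hx] <;> omega

/-- in the setting of the source/submodule swap (`D` a non-simple
perfect matching, `SV` the vertex set of the supporting subquiver of a proper
simple submodule, `α`/`β` the exiting/entering arrow sets, `D' = (D \ α) ∪ β`),
the perfect matchings `D` and `D'` are equivalent: `n_D(p) = n_{D'}(p)` for
every cycle `p` in `Q`. -/
theorem stmt5 [Fintype V] [Fintype E] (Q : QuiverData V E) (U : Set (List E))
    (hdimer : IsDimer Q U) (D : Set E) (hD : IsPerfectMatching U D)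
    (SV : Set V) (hne : SV.Nonempty) (hproper : SV ≠ Set.univ)
    (hclosed : ∀ a : E, a ∉ D → Q.t a ∈ SV → Q.h a ∈ SV) :
    MatchingEquiv Q D
      ((D \ {a : E | Q.t a ∈ SV ∧ ¬(a ∉ D ∧ Q.t a ∈ SV ∧ Q.h a ∈ SV)}) ∪
        {a : E | Q.h a ∈ SV ∧ ¬(a ∉ D ∧ Q.t a ∈ SV ∧ Q.h a ∈ SV)}) := by
  have hno := no_entering Q U hdimer D hD SV hclosed
  set D' : Set E :=
      ((D \ {a : E | Q.t a ∈ SV ∧ ¬(a ∉ D ∧ Q.t a ∈ SV ∧ Q.h a ∈ SV)}) ∪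
        {a : E | Q.h a ∈ SV ∧ ¬(a ∉ D ∧ Q.t a ∈ SV ∧ Q.h a ∈ SV)}) with hD'def
  -- pointwise counting identity
  have key : ∀ e : E,
      ind D' e + ind SV (Q.t e) = ind D e + ind SV (Q.h e) := by
    intro e
    have hmem : e ∈ D' ↔
        ((e ∈ D ∧ ¬(Q.t e ∈ SV ∧ ¬(e ∉ D ∧ Q.t e ∈ SV ∧ Q.h e ∈ SV))) ∨
          (Q.h e ∈ SV ∧ ¬(e ∉ D ∧ Q.t e ∈ SV ∧ Q.h e ∈ SV))) := by
      rw [hD'def]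
      simp [Set.mem_union, Set.mem_diff, Set.mem_setOf_eq]
    unfold ind
    by_cases heD : e ∈ D <;> by_cases ht : Q.t e ∈ SV <;>
      by_cases hh : Q.h e ∈ SV
    · simp [hmem, heD, ht, hh]
    · simp [hmem, heD, ht, hh]
    · exact absurd (hno e heD hh) ht
    · simp [hmem, heD, ht, hh]
    · simp [hmem, heD, ht, hh]
    · exact absurd (hclosed e heD ht) hh
    · simp [hmem, heD, ht, hh]
    · simp [hmem, heD, ht, hh]
  -- summed version of the pointwise identity
  have main : ∀ q : List E,
      nD D' q + (q.map (fun e => ind SV (Q.t e))).sum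
      = nD D q + (q.map (fun e => ind SV (Q.h e))).sum := by
    intro q
    rw [count_eq_sum D', count_eq_sum D]
    exact sum_aux _ _ _ _ key q
  intro p hcyc
  obtain ⟨hpath, hpne, a, b, ha, hb, hab⟩ := hcyc
  have htel := telescope Q SV p hpath a b ha hb
  rw [hab] at htel
  have hmain := main p
  omega
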